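/- Let V_L be m×n₁, T_L be n₁×n₁, V_R be (m−n₁)×n₂, T_R be n₂×n₂ complex matrices. Set W = [0; V_R] (the m×n₂ matrix obtained by stacking an n₁×n₂ zero block on top of V_R), V = [V_L W], and T = [[T_L, −T_L V_L^H W T_R],[0, T_R]]. Then I − V T V^H = (I − V_L T_L V_L^H) · diag(I_{n₁}, I_{m−n₁} − V_R T_R V_R^H). -/

import Mathlib

open Matrix

theorem stmt1 (n₁ n₂ m₂ : ℕ)
    (VL : Matrix (Fin n₁ ⊕ Fin m₂) (Fin n₁) ℂ) (TL : Matrix (Fin n₁) (Fin n₁) ℂ)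
    (VR : Matrix (Fin m₂) (Fin n₂) ℂ) (TR : Matrix (Fin n₂) (Fin n₂) ℂ)
    (W : Matrix (Fin n₁ ⊕ Fin m₂) (Fin n₂) ℂ)
    (hW : W = Matrix.of fun i j => Sum.casesOn i (fun _ => (0 : ℂ)) (fun i' => VR i' j))
    (V : Matrix (Fin n₁ ⊕ Fin m₂) (Fin n₁ ⊕ Fin n₂) ℂ)
    (hV : V = Matrix.fromCols VL W)
    (T : Matrix (Fin n₁ ⊕ Fin n₂) (Fin n₁ ⊕ Fin n₂) ℂ)
    (hT : T = Matrix.fromBlocks TL (-(TL * VLᴴ * W * TR)) 0 TR) :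
    1 - V * T * Vᴴ =
      (1 - VL * TL * VLᴴ) * Matrix.fromBlocks 1 0 0 (1 - VR * TR * VRᴴ) := by
  have hW' : W = Matrix.fromRows 0 VR := by
    rw [hW]; ext (i | i) j <;> rfl
  have hWTW : W * TR * Wᴴ = Matrix.fromBlocks 0 0 0 (VR * TR * VRᴴ) := by
    rw [hW', conjTranspose_fromRows_eq_fromCols_conjTranspose]
    ext (i | i) (j | j) <;> simp [Matrix.mul_apply]
  have hkey : Matrix.fromBlocks (1 : Matrix (Fin n₁) (Fin n₁) ℂ) 0 0
      (1 - VR * TR * VRᴴ) = 1 - W * TR * Wᴴ := by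
    rw [hWTW]
    ext (i | i) (j | j) <;> simp [Matrix.one_apply]
  rw [hkey, hV, hT, conjTranspose_fromCols_eq_fromRows_conjTranspose,
    Matrix.fromCols_mul_fromBlocks, Matrix.fromCols_mul_fromRows]
  simp only [Matrix.mul_zero, add_zero, Matrix.zero_mul, Matrix.mul_neg,
    Matrix.neg_mul, Matrix.add_mul, Matrix.mul_sub, Matrix.sub_mul, sub_mul, mul_sub, neg_add_rev, Matrix.mul_one,
    Matrix.one_mul, Matrix.mul_assoc]
  abel
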